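/- Let u be a C² solution in x,t of u_t + (u(x+h,t) + u(x-h,t))u_x = 0, 2h-periodic in x, with u(0,t) = u(h,t) = 0 for all t. Then F₁(t) := u_x(0,t) and F₂(t) := u_x(h,t) satisfy the ODE system F₁' + 2F₁F₂ = 0, F₂' + 2F₁F₂ = 0. -/

import Mathlib

/-- For a `C²`, `2h`-periodic (in `x`) solution of the plus-sign nonlocal Burgers
equation with `u(0,t) = u(h,t) = 0`, the functions `F₁(t) = u_x(0,t)` and
`F₂(t) = u_x(h,t)` satisfy `F₁' + 2F₁F₂ = 0` and `F₂' + 2F₁F₂ = 0`. -/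
theorem stmt_9 (h : ℝ) (hh : 0 < h) (u : ℝ → ℝ → ℝ)
    (hC2 : ContDiff ℝ 2 (fun p : ℝ × ℝ => u p.1 p.2))
    (hper : ∀ x t : ℝ, u (x + 2 * h) t = u x t)
    (hpde : ∀ x t : ℝ, deriv (fun s => u x s) t +
      (u (x + h) t + u (x - h) t) * deriv (fun y => u y t) x = 0)
    (hzero : ∀ t : ℝ, u 0 t = 0 ∧ u h t = 0) :
    ∀ t : ℝ,
      HasDerivAt (fun s => deriv (fun y => u y s) 0)
        (-2 * deriv (fun y => u y t) 0 * deriv (fun y => u y t) h) t ∧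
      HasDerivAt (fun s => deriv (fun y => u y s) h)
        (-2 * deriv (fun y => u y t) 0 * deriv (fun y => u y t) h) t := by
  intro t
  set U : ℝ × ℝ → ℝ := fun p => u p.1 p.2 with hUdef
  have hUdiff : Differentiable ℝ U := hC2.differentiable two_ne_zero
  have hfd1 : ContDiff ℝ 1 (fderiv ℝ U) := hC2.fderiv_right (le_refl 2)
  have hfdd : Differentiable ℝ (fderiv ℝ U) := hfd1.differentiable one_ne_zero
  -- partial derivative in x
  have h1 : ∀ x s : ℝ, HasDerivAt (fun y => u y s) (fderiv ℝ U (x, s) (1, 0)) x := by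
    intro x s
    have := (hUdiff.differentiableAt.hasFDerivAt (x := (x, s))).comp_hasDerivAt x
      ((hasDerivAt_id x).prodMk (hasDerivAt_const x s))
    simpa [Function.comp_def] using this
  -- partial derivative in t
  have h2 : ∀ x s : ℝ, HasDerivAt (fun r => u x r) (fderiv ℝ U (x, s) (0, 1)) s := by
    intro x s
    have := (hUdiff.differentiableAt.hasFDerivAt (x := (x, s))).comp_hasDerivAt s
      ((hasDerivAt_const s x).prodMk (hasDerivAt_id s))
    simpa [Function.comp_def] using this
  set D : ℝ → ℝ := fun x => fderiv ℝ U (x, t) (1, 0) with hDdef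
  have hDx : ∀ x : ℝ, deriv (fun y => u y t) x = D x := fun x => (h1 x t).deriv
  -- periodicity of D
  have hDper : ∀ x : ℝ, D (x + 2 * h) = D x := by
    intro x
    have h3 : HasDerivAt (fun y => u (y + 2 * h) t) (D (x + 2 * h)) x := by
      have := (h1 (x + 2 * h) t).comp x ((hasDerivAt_id x).add_const (2 * h))
      simpa [Function.comp_def] using this
    have h4 : (fun y : ℝ => u (y + 2 * h) t) = fun y => u y t :=
      funext fun y => hper y t
    rw [h4] at h3
    exact h3.unique (h1 x t)
  -- the PDE rewritten for fderiv
  have hpde' : ∀ x s : ℝ, fderiv ℝ U (x, s) (0, 1) =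
      -((u (x + h) s + u (x - h) s) * fderiv ℝ U (x, s) (1, 0)) := by
    intro x s
    have := hpde x s
    rw [(h2 x s).deriv, (h1 x s).deriv] at this
    linarith
  -- the key general computation
  have key : ∀ x₀ E : ℝ, u (x₀ + h) t = 0 → u (x₀ - h) t = 0 →
      HasDerivAt (fun y => u y t) E (x₀ + h) →
      HasDerivAt (fun y => u y t) E (x₀ - h) →
      HasDerivAt (fun s => deriv (fun y => u y s) x₀) (-(2 * E * D x₀)) t := by
    intro x₀ E hv1 hv2 hE1 hE2
    set B : ℝ × ℝ →L[ℝ] ℝ × ℝ →L[ℝ] ℝ := fderiv ℝ (fderiv ℝ U) (x₀, t) with hBdef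
    have hB : HasFDerivAt (fderiv ℝ U) B (x₀, t) := hfdd.differentiableAt.hasFDerivAt
    have hsym : B (1, 0) (0, 1) = B (0, 1) (1, 0) :=
      second_derivative_symmetric (fun y => hUdiff.differentiableAt.hasFDerivAt) hB _ _
    -- the t-derivative of u_x(x₀, ·)
    have hA : HasDerivAt (fun s => deriv (fun y => u y s) x₀) (B (0, 1) (1, 0)) t := by
      have hc : HasDerivAt (fun s => fderiv ℝ U (x₀, s)) (B (0, 1)) t := by
        have := hB.comp_hasDerivAt t ((hasDerivAt_const t x₀).prodMk (hasDerivAt_id t))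
        simpa [Function.comp_def] using this
      have := hc.clm_apply (hasDerivAt_const t ((1 : ℝ), (0 : ℝ)))
      simp only [map_zero, add_zero] at this
      have heq : (fun s => deriv (fun y => u y s) x₀) =
          fun s => fderiv ℝ U (x₀, s) (1, 0) := funext fun s => (h1 x₀ s).deriv
      rw [heq]
      simpa using this
    -- the x-derivative of u_t(·, t) at x₀, computed two ways
    have hC : HasDerivAt (fun x => fderiv ℝ U (x, t) (0, 1)) (B (1, 0) (0, 1)) x₀ := by
      have hc : HasDerivAt (fun x => fderiv ℝ U (x, t)) (B (1, 0)) x₀ := by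
        have := hB.comp_hasDerivAt x₀ ((hasDerivAt_id x₀).prodMk (hasDerivAt_const x₀ t))
        simpa [Function.comp_def] using this
      have := hc.clm_apply (hasDerivAt_const x₀ ((0 : ℝ), (1 : ℝ)))
      simpa using this
    have hDd : HasDerivAt (fun x => fderiv ℝ U (x, t)) (B (1, 0)) x₀ := by
      have := hB.comp_hasDerivAt x₀ ((hasDerivAt_id x₀).prodMk (hasDerivAt_const x₀ t))
      simpa [Function.comp_def] using this
    have hDder : HasDerivAt D (B (1, 0) (1, 0)) x₀ := by
      have := hDd.clm_apply (hasDerivAt_const x₀ ((1 : ℝ), (0 : ℝ)))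
      simpa using this
    -- derivative of the RHS of the PDE at x₀
    have ha : HasDerivAt (fun x => u (x + h) t) E x₀ := by
      have := hE1.comp x₀ ((hasDerivAt_id x₀).add_const h)
      simpa [Function.comp_def] using this
    have hb : HasDerivAt (fun x => u (x - h) t) E x₀ := by
      have := hE2.comp x₀ ((hasDerivAt_id x₀).sub_const h)
      simpa [Function.comp_def] using this
    have hD0 : HasDerivAt (fun y => u y t) (D x₀) x₀ := h1 x₀ t
    have hrhs : HasDerivAt
        (fun x => -((u (x + h) t + u (x - h) t) * fderiv ℝ U (x, t) (1, 0)))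
        (-(2 * E * D x₀)) x₀ := by
      have hDx' : HasDerivAt (fun x => fderiv ℝ U (x, t) (1, 0)) (B (1, 0) (1, 0)) x₀ :=
        hDder
      have := (((ha.add hb).mul hDx').neg)
      refine this.congr_deriv ?_
      simp only [Pi.add_apply]
      rw [hv1, hv2]
      simp only [hDdef]
      ring
    have heq2 : (fun x => fderiv ℝ U (x, t) (0, 1)) =
        fun x => -((u (x + h) t + u (x - h) t) * fderiv ℝ U (x, t) (1, 0)) :=
      funext fun x => hpde' x t
    rw [heq2] at hC
    have : B (1, 0) (0, 1) = -(2 * E * D x₀) := hC.unique hrhs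
    rw [← hsym, this] at hA
    exact hA
  -- auxiliary values
  have hu0 : u 0 t = 0 := (hzero t).1
  have huh : u h t = 0 := (hzero t).2
  have humh : u (-h) t = 0 := by
    have := hper (-h) t
    rw [show -h + 2 * h = h by ring] at this
    rw [← this]; exact huh
  have hu2h : u (2 * h) t = 0 := by
    have := hper 0 t; simpa [hu0] using this
  -- D(-h) = D h and D(2h) = D 0
  have hDmh : D (-h) = D h := by
    have := hDper (-h)
    rw [show -h + 2 * h = h by ring] at this
    exact this.symm
  have hD2h : D (2 * h) = D 0 := by
    have := hDper 0; simpa using this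
  constructor
  · have k := key 0 (D h) (by simpa using huh) (by simpa using humh)
      (by simpa using h1 h t) (by rw [← hDmh]; simpa using h1 (-h) t)
    have : -(2 * D h * D 0) = -2 * deriv (fun y => u y t) 0 * deriv (fun y => u y t) h := by
      rw [hDx, hDx]; ring
    rw [← this]
    exact k
  · have k := key h (D 0) (by rw [show h + h = 2 * h by ring]; exact hu2h)
      (by simpa using hu0)
      (by rw [show h + h = 2 * h by ring, ← hD2h]; exact h1 (2 * h) t)
      (by simpa using h1 0 t)
    have : -(2 * D 0 * D h) = -2 * deriv (fun y => u y t) 0 * deriv (fun y => u y t) h := by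
      rw [hDx, hDx]; ring
    rw [← this]
    exact k
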